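/- Let x, q ∈ ℝ^d with ‖q‖ = 1, M > 0, 0 < U < 1 with ‖Ux/M‖ ≤ 1, and m ∈ ℕ with m ≥ 1. Define P(x) = (Ux/M, 1/2 - ‖Ux/M‖², 1/2 - ‖Ux/M‖⁴, …, 1/2 - ‖Ux/M‖^{2^m}) and Q(q) = (q, 0, …, 0), both in ℝ^{d+m}. Then ⟨Q(q), P(x)⟩ / (‖Q(q)‖·‖P(x)‖) = (U/M)·⟨q, x⟩ / √(m/4 + ‖Ux/M‖^{2^{m+1}}). -/

import Mathlib

open Real RealInnerProductSpace

noncomputable def signAlshP {d : ℕ} (m : ℕ) (U M : ℝ) (x : EuclideanSpace ℝ (Fin d)) :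
    EuclideanSpace ℝ (Fin (d + m)) :=
  (EuclideanSpace.equiv (Fin (d + m)) ℝ).symm
    (Fin.append (EuclideanSpace.equiv (Fin d) ℝ ((U / M) • x))
      (fun j : Fin m => (1 / 2 : ℝ) - ‖(U / M) • x‖ ^ (2 ^ (j.val + 1))))

noncomputable def signAlshQ {d : ℕ} (m : ℕ) (q : EuclideanSpace ℝ (Fin d)) :
    EuclideanSpace ℝ (Fin (d + m)) :=
  (EuclideanSpace.equiv (Fin (d + m)) ℝ).symm
    (Fin.append (EuclideanSpace.equiv (Fin d) ℝ q) (fun _ : Fin m => (0 : ℝ)))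

lemma tel_sum (t : ℝ) (m : ℕ) :
    ∑ j : Fin m, ((1 / 2 : ℝ) - t ^ (2 ^ (j.val + 1))) ^ 2
      = (m : ℝ) / 4 + t ^ (2 ^ (m + 1)) - t ^ 2 := by
  induction m with
  | zero => simp [pow_succ, pow_mul]
  | succ n ih =>
    rw [Fin.sum_univ_castSucc]
    simp only [Fin.coe_castSucc, Fin.val_last, ih]
    have h1 : (2:ℕ) ^ (n + 1 + 1) = 2 ^ (n + 1) * 2 := by ring
    rw [h1, pow_mul]
    push_cast
    ring

lemma signAlshP_apply {d : ℕ} (m : ℕ) (U M : ℝ) (x : EuclideanSpace ℝ (Fin d))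
    (i : Fin (d + m)) :
    signAlshP m U M x i = Fin.append (fun k : Fin d => ((U / M) • x) k)
      (fun j : Fin m => (1 / 2 : ℝ) - ‖(U / M) • x‖ ^ (2 ^ (j.val + 1))) i := rfl

lemma signAlshQ_apply {d : ℕ} (m : ℕ) (q : EuclideanSpace ℝ (Fin d)) (i : Fin (d + m)) :
    signAlshQ m q i = Fin.append (fun k : Fin d => q k) (fun _ : Fin m => (0 : ℝ)) i := rfl

theorem signalsh_identity (d m : ℕ) (U M : ℝ) (q x : EuclideanSpace ℝ (Fin d))
    (hq : ‖q‖ = 1) (hM : 0 < M) (hU0 : 0 < U) (hU1 : U < 1) (hm : 1 ≤ m)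
    (hxn : ‖(U / M) • x‖ ≤ 1) :
    ⟪signAlshQ m q, signAlshP m U M x⟫ / (‖signAlshQ m q‖ * ‖signAlshP m U M x‖) =
      (U / M) * ⟪q, x⟫ / Real.sqrt ((m : ℝ) / 4 + ‖(U / M) • x‖ ^ (2 ^ (m + 1))) := by
  set t := ‖(U / M) • x‖ with ht
  have hQP : ⟪signAlshQ m q, signAlshP m U M x⟫ = (U / M) * ⟪q, x⟫ := by
    simp only [PiLp.inner_apply, RCLike.inner_apply, conj_trivial, signAlshP_apply,
      signAlshQ_apply]
    rw [Fin.sum_univ_add]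
    simp [Fin.append_left, Fin.append_right, PiLp.inner_apply, Finset.mul_sum, mul_comm,
      mul_left_comm, real_inner_smul_right]
  have hQ : ‖signAlshQ m q‖ = 1 := by
    have h2 : ‖signAlshQ m q‖ ^ 2 = 1 := by
      rw [← real_inner_self_eq_norm_sq]
      simp only [PiLp.inner_apply, RCLike.inner_apply, conj_trivial, signAlshQ_apply]
      rw [Fin.sum_univ_add]
      simp only [Fin.append_left, Fin.append_right, mul_zero, Finset.sum_const_zero, add_zero]
      have h3 : ∑ i : Fin d, q i * q i = ⟪q, q⟫ := by
        simp only [PiLp.inner_apply, RCLike.inner_apply, conj_trivial]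
      rw [h3, real_inner_self_eq_norm_sq, hq]; norm_num
    nlinarith [norm_nonneg (signAlshQ m q)]
  have hP2 : ‖signAlshP m U M x‖ ^ 2 = (m : ℝ) / 4 + t ^ (2 ^ (m + 1)) := by
    rw [← real_inner_self_eq_norm_sq]
    simp only [PiLp.inner_apply, RCLike.inner_apply, conj_trivial, signAlshP_apply]
    rw [Fin.sum_univ_add]
    simp only [Fin.append_left, Fin.append_right]
    have h1 : ∑ i : Fin d, ((U / M) • x) i * ((U / M) • x) i = t ^ 2 := by
      rw [ht, ← real_inner_self_eq_norm_sq]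
      simp only [PiLp.inner_apply, RCLike.inner_apply, conj_trivial]
    have h2 : ∑ j : Fin m,
        ((1 / 2 : ℝ) - t ^ (2 ^ (j.val + 1))) * ((1 / 2 : ℝ) - t ^ (2 ^ (j.val + 1)))
        = (m : ℝ) / 4 + t ^ (2 ^ (m + 1)) - t ^ 2 := by
      rw [← tel_sum t m]; congr 1; ext j; ring
    rw [h1, h2]; ring
  have hP : ‖signAlshP m U M x‖ = Real.sqrt ((m : ℝ) / 4 + t ^ (2 ^ (m + 1))) := by
    rw [← hP2, Real.sqrt_sq (norm_nonneg _)]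
  rw [hQP, hQ, hP, one_mul]
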